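/- Assume the matrix 1 + Φ τ̂ is invertible, where Φ is a block-diagonal invertible 4m×4m matrix and τ̂ = τ ⊗ 1₂. Then det(1 − Φ Ŝ) = det(1 + Φ τ̂) · (det D)^{-2} · det( δ̂_t* (2(1 + Φ τ̂)^{-1} − 1) δ̂_t ), where Ŝ = S ⊗ 1₂, δ̂_t = δ_t ⊗ 1₂, and S = 2 δ_s D^{-1} δ_t* − τ. -/

import Mathlib

open Matrix BigOperators
open scoped Classical Kronecker

noncomputable section

variable {V E : Type*} [Fintype V] [Fintype E] [DecidableEq V] [DecidableEq E]

/-- Incidence indicator matrix: entry `(v, e)` is `1` iff `f e = v`. -/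
def incMat (f : E → V) : Matrix V E ℂ :=
  Matrix.of fun v e => if f e = v then 1 else 0

/-- Edge-reversal permutation matrix. -/
def revMat (rev : E → E) : Matrix E E ℂ :=
  Matrix.of fun e f => if f = rev e then 1 else 0

/-- Degree of a vertex (number of oriented edges terminating there). -/
def deg (t : E → V) (v : V) : ℕ :=
  Finset.card (Finset.univ.filter fun e => t e = v)

/-- Diagonal degree matrix. -/
def degMat (t : E → V) : Matrix V V ℂ :=
  Matrix.diagonal fun v => (deg t v : ℂ)

/-- The bond-scattering matrix `S = 2 δ_s D⁻¹ δ_t* − τ`. -/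
def bondS (s t : E → V) (rev : E → E) : Matrix E E ℂ :=
  (2 : ℂ) • ((incMat s).transpose * (degMat t)⁻¹ * incMat t) - revMat rev

lemma sub_kron {l m : Type*} [Fintype l] [Fintype m]
    (A B : Matrix l m ℂ) (C : Matrix (Fin 2) (Fin 2) ℂ) :
    (A - B) ⊗ₖ C = A ⊗ₖ C - B ⊗ₖ C := by
  ext ⟨i, k⟩ ⟨j, l⟩
  simp [Matrix.kroneckerMap, sub_mul]

lemma kmul {α β γ : Type*} [Fintype α] [Fintype β] [Fintype γ]
    (X : Matrix α β ℂ) (Y : Matrix β γ ℂ) :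
    (X * Y) ⊗ₖ (1 : Matrix (Fin 2) (Fin 2) ℂ)
      = (X ⊗ₖ (1 : Matrix (Fin 2) (Fin 2) ℂ)) * (Y ⊗ₖ (1 : Matrix (Fin 2) (Fin 2) ℂ)) := by
  rw [← Matrix.mul_kronecker_mul, Matrix.one_mul]

lemma rev_mul_incT (s t : E → V) (rev : E → E) (htr : ∀ e, t (rev e) = s e) :
    revMat rev * (incMat t)ᵀ = (incMat s)ᵀ := by
  ext e v
  rw [Matrix.mul_apply, Finset.sum_eq_single (rev e)]
  · simp [revMat, incMat, htr e]
  · intro f _ hf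
    simp [revMat, hf]
  · intro h
    exact absurd (Finset.mem_univ _) h

lemma inc_mul_incT (t : E → V) : incMat t * (incMat t)ᵀ = degMat t := by
  ext v w
  by_cases h : v = w
  · subst h
    rw [Matrix.mul_apply, degMat, Matrix.diagonal_apply_eq, deg]
    have he : ∀ e : E, incMat t v e * (incMat t)ᵀ e v = if t e = v then (1:ℂ) else 0 := by
      intro e
      simp only [incMat, Matrix.transpose_apply, Matrix.of_apply]
      split_ifs <;> simp
    rw [Finset.sum_congr rfl fun e _ => he e, Finset.sum_boole]
  · rw [Matrix.mul_apply, degMat, Matrix.diagonal_apply_ne _ h]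
    apply Finset.sum_eq_zero
    intro e _
    simp only [incMat, Matrix.transpose_apply, Matrix.of_apply]
    split_ifs with h1 h2
    · exact absurd (h1 ▸ h2) h
    · simp
    · simp
    · simp

/-- Ihara-style factorization of the bond secular determinant:
`det(1 − Φ Ŝ) = det(1 + Φ τ̂) · (det D)⁻² · det(δ̂_t* (2(1 + Φ τ̂)⁻¹ − 1) δ̂_t)`. -/
theorem stmt19 (s t : E → V) (rev : E → E) (hrev : Function.Involutive rev)
    (hne : ∀ e, rev e ≠ e)
    (hsr : ∀ e, s (rev e) = t e) (htr : ∀ e, t (rev e) = s e)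
    (hd : ∀ v, 0 < deg t v)
    (Φ : Matrix (E × Fin 2) (E × Fin 2) ℂ)
    (hblock : ∀ a b : E × Fin 2, a.1 ≠ b.1 → Φ a b = 0)
    (hΦ : IsUnit Φ)
    (hinv : IsUnit (1 + Φ * (revMat rev ⊗ₖ (1 : Matrix (Fin 2) (Fin 2) ℂ)))) :
    (1 - Φ * (bondS s t rev ⊗ₖ (1 : Matrix (Fin 2) (Fin 2) ℂ))).det
      = (1 + Φ * (revMat rev ⊗ₖ (1 : Matrix (Fin 2) (Fin 2) ℂ))).det
        * ((degMat t).det ^ 2)⁻¹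
        * ((incMat t ⊗ₖ (1 : Matrix (Fin 2) (Fin 2) ℂ))
            * ((2 : ℂ) • (1 + Φ * (revMat rev ⊗ₖ (1 : Matrix (Fin 2) (Fin 2) ℂ)))⁻¹ - 1)
            * ((incMat t).transpose ⊗ₖ (1 : Matrix (Fin 2) (Fin 2) ℂ))).det := by
  classical
  set I2 : Matrix (Fin 2) (Fin 2) ℂ := 1 with hI2
  set A : Matrix (E × Fin 2) (E × Fin 2) ℂ := 1 + Φ * (revMat rev ⊗ₖ I2) with hA
  have hAdet : IsUnit A.det := (Matrix.isUnit_iff_isUnit_det _).1 hinv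
  have hA1 : A * A⁻¹ = 1 := Matrix.mul_nonsing_inv _ hAdet
  have hA2 : A⁻¹ * A = 1 := Matrix.nonsing_inv_mul _ hAdet
  have hDdet : (degMat t).det ≠ 0 := by
    rw [degMat, Matrix.det_diagonal]
    exact Finset.prod_ne_zero_iff.2 fun v _ => Nat.cast_ne_zero.2 (hd v).ne'
  have hDunit : IsUnit (degMat t).det := isUnit_iff_ne_zero.2 hDdet
  have hDinv : (degMat t)⁻¹ * degMat t = 1 := Matrix.nonsing_inv_mul _ hDunit
  set Mt : Matrix (V × Fin 2) (E × Fin 2) ℂ := incMat t ⊗ₖ I2 with hMt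
  set Mt' : Matrix (E × Fin 2) (V × Fin 2) ℂ := (incMat t)ᵀ ⊗ₖ I2 with hMt'
  set Ms : Matrix (E × Fin 2) (V × Fin 2) ℂ := (incMat s)ᵀ ⊗ₖ I2 with hMs
  set Dk : Matrix (V × Fin 2) (V × Fin 2) ℂ := degMat t ⊗ₖ I2 with hDk
  set Dki : Matrix (V × Fin 2) (V × Fin 2) ℂ := (degMat t)⁻¹ ⊗ₖ I2 with hDki
  have hDkinv : Dki * Dk = 1 := by
    rw [hDki, hDk, ← kmul, hDinv]
    exact Matrix.one_kronecker_one
  have hPhiMs : Φ * Ms = (A - 1) * Mt' := by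
    rw [hMs, ← rev_mul_incT s t rev htr, kmul, hA]
    simp [Matrix.mul_assoc]
    rfl
  have hMtMt' : Mt * Mt' = Dk := by
    rw [hMt, hMt', hDk, ← kmul, inc_mul_incT]
  set B1 : Matrix (E × Fin 2) (V × Fin 2) ℂ := Φ * Ms with hB1
  set B2 : Matrix (V × Fin 2) (E × Fin 2) ℂ := Dki * ((2:ℂ) • Mt) with hB2
  have eq1 : 1 - Φ * (bondS s t rev ⊗ₖ I2) = A - B1 * B2 := by
    rw [bondS, sub_kron, Matrix.smul_kronecker, kmul, kmul, hA, hB1, hB2, hMs, hMt, hDki]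
    simp only [Matrix.mul_sub, Matrix.mul_smul, Matrix.smul_mul, Matrix.mul_assoc]
    module
  have hfac : A - B1 * B2 = A * (1 - A⁻¹ * (B1 * B2)) := by
    rw [Matrix.mul_sub, Matrix.mul_one, ← Matrix.mul_assoc A A⁻¹ (B1 * B2), hA1,
      Matrix.one_mul]
  have step2 : (1 - A⁻¹ * (B1 * B2)).det = (1 - B2 * (A⁻¹ * B1)).det := by
    have h := Matrix.det_one_add_mul_comm (-(A⁻¹ * B1)) B2
    simp only [Matrix.neg_mul, Matrix.mul_neg, ← sub_eq_add_neg, Matrix.mul_assoc] at h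
    simpa [Matrix.mul_assoc] using h
  have hAm : A⁻¹ * B1 = Mt' - A⁻¹ * Mt' := by
    rw [hPhiMs, ← Matrix.mul_assoc A⁻¹ (A - 1) Mt', Matrix.mul_sub, hA2, Matrix.mul_one,
      Matrix.sub_mul, Matrix.one_mul]
  have e1 : 1 - B2 * (A⁻¹ * B1)
      = (2:ℂ) • (Dki * (Mt * (A⁻¹ * Mt'))) - 1 := by
    rw [hAm, hB2]
    simp only [Matrix.mul_smul, Matrix.smul_mul, Matrix.mul_sub, Matrix.sub_mul,
      Matrix.mul_assoc, smul_sub]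
    rw [hMtMt', hDkinv]
    module
  have e2 : Dki * (Mt * ((2:ℂ) • A⁻¹ - 1) * Mt')
      = (2:ℂ) • (Dki * (Mt * (A⁻¹ * Mt'))) - 1 := by
    simp only [Matrix.mul_sub, Matrix.sub_mul, Matrix.mul_smul, Matrix.smul_mul,
      Matrix.mul_one, Matrix.one_mul, Matrix.mul_assoc, smul_sub]
    rw [hMtMt', hDkinv]
    try module
  have hdetDki : Dki.det = ((degMat t).det ^ 2)⁻¹ := by
    rw [hDki, hI2, Matrix.det_kronecker, Matrix.det_one, one_pow, mul_one,
      Matrix.det_nonsing_inv, Ring.inverse_eq_inv', Fintype.card_fin, ← inv_pow]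
  have assoc : Mt * ((2:ℂ) • A⁻¹ - 1) * Mt' = Mt * ((2:ℂ) • A⁻¹ - 1) * Mt' := rfl
  have hcalc := calc (1 - Φ * (bondS s t rev ⊗ₖ I2)).det
      = (A * (1 - A⁻¹ * (B1 * B2))).det := by rw [eq1, hfac]
    _ = A.det * (1 - A⁻¹ * (B1 * B2)).det := Matrix.det_mul _ _
    _ = A.det * (1 - B2 * (A⁻¹ * B1)).det := by rw [step2]
    _ = A.det * (Dki * (Mt * ((2:ℂ) • A⁻¹ - 1) * Mt')).det := by
        rw [e1.trans e2.symm]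
    _ = A.det * (Dki.det * (Mt * ((2:ℂ) • A⁻¹ - 1) * Mt').det) := by
        rw [Matrix.det_mul]
    _ = A.det * ((degMat t).det ^ 2)⁻¹ * (Mt * ((2:ℂ) • A⁻¹ - 1) * Mt').det := by
        rw [hdetDki]
        exact (mul_assoc _ _ _).symm
  rw [hcalc]
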